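/- The space [ℙ_{k−1}]² of two-variable polynomial vector fields of component degree ≤ k−1 decomposes as the direct sum [ℙ_{k−1}]² = x ℙ_{k−2} ⊕ curl(ℙ_k), where x ℙ_{k−2} = {(x₁q, x₂q) : q ∈ ℙ_{k−2}} and curl(ℙ_k) = {(∂p/∂x₂, −∂p/∂x₁) : p ∈ ℙ_k}. -/
import Mathlib

open MvPolynomial

lemma degsum (s : Fin 2 →₀ ℕ) : (s.sum fun _ e => e) = s 0 + s 1 := by
  rw [Finsupp.sum_fintype _ _ (fun _ => rfl)]
  exact Fin.sum_univ_two _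

lemma mem_supp_deg {f : MvPolynomial (Fin 2) ℝ} {s : Fin 2 →₀ ℕ} (h : s ∈ f.support) :
    s 0 + s 1 ≤ f.totalDegree := by
  rw [← degsum]; exact le_totalDegree h

lemma totalDegree_le_of (f : MvPolynomial (Fin 2) ℝ) (d : ℕ)
    (h : ∀ s ∈ f.support, s 0 + s 1 ≤ d) : f.totalDegree ≤ d := by
  rw [totalDegree]
  exact Finset.sup_le fun s hs => by rw [degsum]; exact h s hs

lemma fin2_finsupp_eq_zero {s : Fin 2 →₀ ℕ} (h0 : s 0 = 0) (h1 : s 1 = 0) : s = 0 := by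
  ext j
  fin_cases j
  · simpa using h0
  · simpa using h1

lemma euler_monomial (i : Fin 2) (s : Fin 2 →₀ ℕ) (c : ℝ) :
    X i * pderiv i (monomial s c) = monomial s (c * (s i : ℝ)) := by
  rw [pderiv_monomial]
  by_cases h : s i = 0
  · simp [h]
  · rw [X, monomial_mul, one_mul]
    have hss : Finsupp.single i 1 + (s - Finsupp.single i 1) = s := by
      ext j
      simp only [Finsupp.add_apply, Finsupp.tsub_apply, Finsupp.single_apply]
      split_ifs with hij
      · subst hij; omega
      · omega
    rw [hss]

/-- The Euler operator `x ∂₀ + y ∂₁`. -/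
noncomputable def eul (f : MvPolynomial (Fin 2) ℝ) : MvPolynomial (Fin 2) ℝ :=
  X 0 * pderiv 0 f + X 1 * pderiv 1 f

lemma eul_monomial (s : Fin 2 →₀ ℕ) (c : ℝ) :
    eul (monomial s c) = monomial s (c * ((s 0 + s 1 : ℕ) : ℝ)) := by
  unfold eul
  rw [euler_monomial, euler_monomial, ← map_add]
  congr 1
  push_cast
  ring

lemma eul_sum {α : Type*} (t : Finset α) (f : α → MvPolynomial (Fin 2) ℝ) :
    eul (∑ i ∈ t, f i) = ∑ i ∈ t, eul (f i) := by
  unfold eul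
  rw [map_sum (pderiv 0), map_sum (pderiv 1), Finset.mul_sum, Finset.mul_sum,
    ← Finset.sum_add_distrib]

lemma coeff_eul (f : MvPolynomial (Fin 2) ℝ) (t : Fin 2 →₀ ℕ) :
    coeff t (eul f) = coeff t f * ((t 0 + t 1 : ℕ) : ℝ) := by
  calc coeff t (eul f) = coeff t (∑ s ∈ f.support, eul (monomial s (coeff s f))) := by
        rw [← eul_sum, ← as_sum]
    _ = _ := by
        simp_rw [eul_monomial]
        rw [coeff_sum]
        simp_rw [coeff_monomial]
        rw [Finset.sum_ite_eq' f.support t (fun s => coeff s f * ((s 0 + s 1 : ℕ) : ℝ))]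
        split_ifs with h
        · rfl
        · rw [notMem_support_iff.mp h, zero_mul]

/-- Inverse of the Euler operator on polynomials with zero constant term. -/
noncomputable def ieul (g : MvPolynomial (Fin 2) ℝ) : MvPolynomial (Fin 2) ℝ :=
  ∑ s ∈ g.support, monomial s (coeff s g * (((s 0 + s 1 : ℕ) : ℝ))⁻¹)

lemma coeff_ieul (g : MvPolynomial (Fin 2) ℝ) (t : Fin 2 →₀ ℕ) :
    coeff t (ieul g) = coeff t g * (((t 0 + t 1 : ℕ) : ℝ))⁻¹ := by
  unfold ieul
  rw [coeff_sum]
  simp_rw [coeff_monomial]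
  rw [Finset.sum_ite_eq' g.support t (fun s => coeff s g * (((s 0 + s 1 : ℕ) : ℝ))⁻¹)]
  split_ifs with h
  · rfl
  · rw [notMem_support_iff.mp h, zero_mul]

lemma eul_ieul (g : MvPolynomial (Fin 2) ℝ) (h0 : coeff 0 g = 0) : eul (ieul g) = g := by
  unfold ieul
  rw [eul_sum]
  conv_rhs => rw [g.as_sum]
  refine Finset.sum_congr rfl fun s hs => ?_
  rw [eul_monomial]
  congr 1
  have hs0 : s ≠ 0 := by rintro rfl; exact (mem_support_iff.mp hs) h0
  have hd : s 0 + s 1 ≠ 0 := by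
    intro H
    exact hs0 (fin2_finsupp_eq_zero (by omega) (by omega))
  have hd' : ((s 0 + s 1 : ℕ) : ℝ) ≠ 0 := Nat.cast_ne_zero.mpr hd
  rw [mul_assoc, inv_mul_cancel₀ hd', mul_one]

lemma totalDegree_pderiv_le (i : Fin 2) (f : MvPolynomial (Fin 2) ℝ) :
    (pderiv i f).totalDegree ≤ f.totalDegree - 1 := by
  conv_lhs => rw [f.as_sum, map_sum]
  refine (totalDegree_finset_sum _ _).trans (Finset.sup_le fun s hs => ?_)
  rw [pderiv_monomial]
  by_cases h : coeff s f * (s i : ℝ) = 0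
  · simp [h]
  · rw [totalDegree_monomial _ h, degsum]
    have hsi : s i ≠ 0 := fun H => h (by simp [H])
    have hd : s 0 + s 1 ≤ f.totalDegree := mem_supp_deg hs
    simp only [Finsupp.tsub_apply]
    fin_cases i <;> simp [Finsupp.single_apply] at hsi ⊢ <;> omega

lemma X_dvd_of (i : Fin 2) (A : MvPolynomial (Fin 2) ℝ)
    (h : ∀ m : Fin 2 →₀ ℕ, m i = 0 → coeff m A = 0) : X i ∣ A := by
  rw [MvPolynomial.X_dvd_iff_modMonomial_eq_zero]
  rw [MvPolynomial.eq_zero_iff]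
  intro m
  by_cases hm : Finsupp.single i 1 ≤ m
  · exact coeff_modMonomial_of_le A hm
  · rw [coeff_modMonomial_of_not_le A hm]
    apply h
    rw [Finsupp.single_le_iff] at hm
    omega

theorem poly_vec_decomposition (k : ℕ) (hk : 2 ≤ k) :
    (∀ F₁ F₂ : MvPolynomial (Fin 2) ℝ,
      F₁.totalDegree ≤ k - 1 → F₂.totalDegree ≤ k - 1 →
      ∃ (q p : MvPolynomial (Fin 2) ℝ), q.totalDegree ≤ k - 2 ∧ p.totalDegree ≤ k ∧
        F₁ = X 0 * q + pderiv (1 : Fin 2) p ∧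
        F₂ = X 1 * q - pderiv (0 : Fin 2) p) ∧
    (∀ q p : MvPolynomial (Fin 2) ℝ, q.totalDegree ≤ k - 2 → p.totalDegree ≤ k →
      X 0 * q = pderiv (1 : Fin 2) p → X 1 * q = -(pderiv (0 : Fin 2) p) →
      q = 0) := by
  constructor
  · intro F₁ F₂ hF1 hF2
    set g : MvPolynomial (Fin 2) ℝ := X 1 * F₁ - X 0 * F₂ with hgdef
    have hdg : g.totalDegree ≤ k := by
      have h1 : (X 1 * F₁).totalDegree ≤ k :=
        (totalDegree_mul _ _).trans (by rw [totalDegree_X]; omega)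
      have h2 : (X 0 * F₂).totalDegree ≤ k :=
        (totalDegree_mul _ _).trans (by rw [totalDegree_X]; omega)
      calc g.totalDegree = (X 1 * F₁ + -(X 0 * F₂)).totalDegree := by rw [hgdef, sub_eq_add_neg]
        _ ≤ max (X 1 * F₁).totalDegree (-(X 0 * F₂)).totalDegree := totalDegree_add _ _
        _ ≤ k := by rw [totalDegree_neg]; omega
    have h0g : coeff 0 g = 0 := by
      rw [hgdef, coeff_sub, coeff_X_mul', coeff_X_mul']
      simp
    set p : MvPolynomial (Fin 2) ℝ := ieul g with hpdef
    have hdp : p.totalDegree ≤ k := by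
      refine le_trans (totalDegree_le_of p g.totalDegree fun s hs => ?_) hdg
      apply mem_supp_deg
      rw [mem_support_iff] at hs ⊢
      intro H
      rw [hpdef, coeff_ieul, H, zero_mul] at hs
      exact hs rfl
    have hE : X 0 * pderiv 0 p + X 1 * pderiv 1 p = X 1 * F₁ - X 0 * F₂ := eul_ieul g h0g
    have key : X 1 * (F₁ - pderiv 1 p) = X 0 * (F₂ + pderiv 0 p) := by linear_combination -hE
    have hdvd : X 0 ∣ (F₁ - pderiv 1 p) := by
      apply X_dvd_of
      intro m hm
      have hco := congrArg (coeff (Finsupp.single 1 1 + m)) key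
      rw [coeff_X_mul, coeff_X_mul'] at hco
      have : (0 : Fin 2) ∉ (Finsupp.single 1 1 + m).support := by
        simp [Finsupp.single_apply, hm]
      rw [if_neg this] at hco
      exact hco
    obtain ⟨q, hq⟩ := hdvd
    have hF2q : X 1 * q = F₂ + pderiv 0 p := by
      have hc : X 0 * (X 1 * q) = X 0 * (F₂ + pderiv 0 p) := by
        linear_combination key - X 1 * hq
      exact mul_left_cancel₀ (X_ne_zero 0) hc
    have hdd : (pderiv (1 : Fin 2) p).totalDegree ≤ k - 1 :=
      (totalDegree_pderiv_le 1 p).trans (by omega)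
    have hdR : (F₁ - pderiv 1 p).totalDegree ≤ k - 1 := by
      calc (F₁ - pderiv 1 p).totalDegree = (F₁ + -(pderiv 1 p)).totalDegree := by
            rw [sub_eq_add_neg]
        _ ≤ max F₁.totalDegree (-(pderiv 1 p)).totalDegree := totalDegree_add _ _
        _ ≤ k - 1 := by rw [totalDegree_neg]; omega
    have hdq : q.totalDegree ≤ k - 2 := by
      refine totalDegree_le_of q (k - 2) fun s hs => ?_
      have hmem : Finsupp.single 0 1 + s ∈ (F₁ - pderiv 1 p).support := by
        rw [mem_support_iff, hq, coeff_X_mul]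
        exact mem_support_iff.mp hs
      have := mem_supp_deg hmem
      simp only [Finsupp.add_apply, Finsupp.single_apply] at this
      norm_num at this
      omega
    exact ⟨q, p, hdq, hdp, by linear_combination hq, by linear_combination -hF2q⟩
  · intro q p hq hp h1 h2
    have hzero : eul p = 0 := by
      unfold eul
      linear_combination X 0 * h2 - X 1 * h1
    have hcoef : ∀ t : Fin 2 →₀ ℕ, t ≠ 0 → coeff t p = 0 := by
      intro t ht
      have hc := coeff_eul p t
      rw [hzero, coeff_zero] at hc
      have hd : t 0 + t 1 ≠ 0 := fun H =>
        ht (fin2_finsupp_eq_zero (by omega) (by omega))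
      exact (mul_eq_zero.mp hc.symm).resolve_right (Nat.cast_ne_zero.mpr hd)
    have hpC : p = C (coeff 0 p) := by
      apply MvPolynomial.ext
      intro t
      by_cases ht : t = 0
      · subst ht; simp
      · rw [hcoef t ht, coeff_C, if_neg (fun h => ht h.symm)]
    have hd1 : pderiv (1 : Fin 2) p = 0 := by rw [hpC]; simp
    rw [hd1] at h1
    rcases mul_eq_zero.mp h1 with h | h
    · exact absurd h (X_ne_zero 0)
    · exact h
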